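/- Let A ∈ GF(2)^{n×n} be symmetric. Form A′ ∈ GF(2)^{(n+k-1)×(n+k-1)} by inserting, after position p, a block of k−1 new indices arranged in a path: the new block B₂ is tridiagonal with 1's on the super- and sub-diagonal and 0 elsewhere, the new indices connect to position p only via the first new index and to one later position q > p only via the last new index, with no other new off-block entries, and the entry A_{p,q} is set to 0 in A′ while all other entries among old indices are unchanged. Then for every t, rank(A′[{1,...,t}, rest]) ≤ max_s rank(A[{1,...,s}, rest]) + 2. -/

import Mathlib

open Matrix

section Helpers

variable {F : Type*} [Field F]

lemma rank_submatrix_le' {m n a b : Type*}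
    [Fintype m] [Fintype n] [Fintype a] [Fintype b] [DecidableEq m] [DecidableEq n]
    (B : Matrix m n F) (f : a → m) (g : b → n) :
    (B.submatrix f g).rank ≤ B.rank := by
  have hfac : (Matrix.of fun (x : a) (j : m) => if j = f x then (1:F) else 0) * B *
      (Matrix.of fun (i : n) (y : b) => if i = g y then (1:F) else 0) = B.submatrix f g := by
    ext x y
    simp [Matrix.mul_apply, ite_mul, mul_ite, Finset.sum_ite_eq, Finset.sum_ite_eq']
  rw [← hfac]
  exact le_trans (Matrix.rank_mul_le_left _ _) (Matrix.rank_mul_le_right _ _)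

lemma rank_add_le' {m n : Type*} [Fintype m] [Fintype n]
    (A B : Matrix m n F) : (A + B).rank ≤ A.rank + B.rank := by
  classical
  rw [Matrix.rank, Matrix.rank, Matrix.rank, Matrix.mulVecLin_add]
  have h : LinearMap.range (A.mulVecLin + B.mulVecLin) ≤
      LinearMap.range A.mulVecLin ⊔ LinearMap.range B.mulVecLin := by
    rintro x ⟨v, rfl⟩
    exact Submodule.mem_sup.2 ⟨_, ⟨v, rfl⟩, _, ⟨v, rfl⟩, rfl⟩
  exact le_trans (Submodule.finrank_mono h)
    (Submodule.finrank_add_le_finrank_add_finrank _ _)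

lemma rank_le_one' {m n : Type*} [Fintype m] [Fintype n] [DecidableEq n]
    (B : Matrix m n F)
    (h : ∀ x y x' y', B x y ≠ 0 → B x' y' ≠ 0 → x = x' ∧ y = y') :
    B.rank ≤ 1 := by
  by_cases h0 : ∀ x y, B x y = 0
  · have hB : B = 0 := by ext x y; exact h0 x y
    simp [hB]
  push_neg at h0
  obtain ⟨x₀, y₀, hx⟩ := h0
  have hfac : (Matrix.of fun (x : m) (_ : Fin 1) => B x y₀) *
      (Matrix.of fun (_ : Fin 1) (y : n) => if y = y₀ then (1:F) else 0) = B := by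
    ext x y
    rw [Matrix.mul_apply]
    simp only [Finset.univ_unique, Finset.sum_singleton, Matrix.of_apply]
    by_cases hy : y = y₀
    · simp [hy]
    · simp only [hy, if_neg, mul_zero, if_false]
      by_contra hne
      exact hy (h x y x₀ y₀ (fun hc => hne hc.symm) hx).2
  rw [← hfac]
  refine le_trans (Matrix.rank_mul_le_right _ _) ?_
  refine le_trans (Matrix.rank_le_card_height _) ?_
  simp

end Helpers

/-- Retraction sending an index of the enlarged matrix back to an old index. -/
def rho (n k1 p : ℕ) (hp1 : 1 ≤ p) (hpn : p ≤ n) (i : Fin (n + k1)) : Fin n :=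
  if _ : (i : ℕ) < p then ⟨(i : ℕ), by omega⟩
  else ⟨(i : ℕ) - k1, by have := i.isLt; omega⟩



/-- The prefix cut-rank: the GF(2) rank of the submatrix of `A` with rows the
first `t` indices and columns the remaining indices. -/
noncomputable def prefRank {N : ℕ} (A : Matrix (Fin N) (Fin N) (ZMod 2)) (t : ℕ) : ℕ :=
  (A.submatrix (fun x : {j : Fin N // (j : ℕ) < t} => (x : Fin N))
               (fun y : {j : Fin N // ¬ (j : ℕ) < t} => (y : Fin N))).rank

/-- Inserting after position `p` a path of `k − 1` new indices
(tridiagonal block `B₂`), attached via its first new index to old position `p`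
(last row of `B₁`) and via its last new index to a later old position `q`
(last row of `B₃`), with the old `(p,q)` entry flipped to `0` and all other old
entries unchanged, increases every prefix cut-rank by at most `2`. -/
theorem stmt11 (n k p : ℕ) (hk : 2 ≤ k) (hp1 : 1 ≤ p) (hpn : p ≤ n)
    (A : Matrix (Fin n) (Fin n) (ZMod 2)) (hA : A.IsSymm)
    (A' : Matrix (Fin (n + (k - 1))) (Fin (n + (k - 1))) (ZMod 2)) (hA' : A'.IsSymm)
    (oldIdx : Fin n → Fin (n + (k - 1)))
    (hOldIdx : oldIdx = fun j : Fin n =>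
      if h : (j : ℕ) < p then ⟨(j : ℕ), by omega⟩
      else ⟨(j : ℕ) + (k - 1), by have := j.isLt; omega⟩)
    (newIdx : Fin (k - 1) → Fin (n + (k - 1)))
    (hNewIdx : newIdx = fun t : Fin (k - 1) => ⟨p + (t : ℕ), by have := t.isLt; omega⟩)
    (P Q : Fin n) (hP : (P : ℕ) = p - 1) (hQ : p ≤ (Q : ℕ))
    (hOld : ∀ i j : Fin n, ¬((i = P ∧ j = Q) ∨ (i = Q ∧ j = P)) →
      A' (oldIdx i) (oldIdx j) = A i j)
    (hFlip : A' (oldIdx P) (oldIdx Q) = 0)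
    (hB2 : ∀ s t : Fin (k - 1), A' (newIdx s) (newIdx t) =
      if (s : ℕ) + 1 = (t : ℕ) ∨ (t : ℕ) + 1 = (s : ℕ) then 1 else 0)
    (hB13 : ∀ (j : Fin n) (t : Fin (k - 1)), A' (oldIdx j) (newIdx t) =
      if (j = P ∧ (t : ℕ) = 0) ∨ (j = Q ∧ (t : ℕ) = k - 2) then 1 else 0)
    (w : ℕ) (hw : ∀ s : ℕ, prefRank A s ≤ w) :
    ∀ t : ℕ, prefRank A' t ≤ w + 2 := by
  intro t
  classical
  have h2z : ∀ a : ZMod 2, (0:ZMod 2) - a - a = 0 := by decide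
  set s : ℕ := min t p + (t - (p + (k - 1))) with hs
  have hOldVal : ∀ j : Fin n, ((oldIdx j : Fin (n+(k-1))) : ℕ)
      = if (j:ℕ) < p then (j:ℕ) else (j:ℕ) + (k-1) := by
    intro j; simp only [hOldIdx]; split_ifs <;> rfl
  have hNewVal : ∀ u : Fin (k-1), ((newIdx u : Fin (n+(k-1))) : ℕ) = p + (u:ℕ) := by
    intro u; simp only [hNewIdx]
  have hIdxLt : ∀ j : Fin n, (((oldIdx j : Fin (n+(k-1))) : ℕ) < t ↔ (j:ℕ) < s) := by
    intro j; rw [hOldVal j]; split_ifs <;> omega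
  have hPval : ((oldIdx P : Fin (n+(k-1))) : ℕ) = p - 1 := by
    rw [hOldVal, hP, if_pos (by omega)]
  have hQval : ((oldIdx Q : Fin (n+(k-1))) : ℕ) = (Q:ℕ) + (k-1) := by
    rw [hOldVal, if_neg (by omega)]
  have hOldInj : ∀ a b : Fin n, oldIdx a = oldIdx b → a = b := by
    intro a b hab
    have h := congrArg (fun z : Fin (n+(k-1)) => (z:ℕ)) hab
    rw [hOldVal, hOldVal] at h
    apply Fin.ext
    split_ifs at h <;> omega
  have hrho_old : ∀ j : Fin n, rho n (k-1) p hp1 hpn (oldIdx j) = j := by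
    intro j
    have hv := hOldVal j
    unfold rho
    split_ifs with h <;> apply Fin.ext <;> simp only [Fin.val_mk] <;>
      split_ifs at hv <;> omega
  have hrho_oldval : ∀ i : Fin (n + (k-1)), ((i:ℕ) < p ∨ p + (k-1) ≤ (i:ℕ)) →
      oldIdx (rho n (k-1) p hp1 hpn i) = i := by
    intro i hi
    apply Fin.ext
    rw [hOldVal]
    unfold rho
    split_ifs <;> simp only [Fin.val_mk] at * <;> omega
  have htri : ∀ i : Fin (n+(k-1)),
      (∃ j : Fin n, oldIdx j = i) ∨ (∃ u : Fin (k-1), newIdx u = i) := by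
    intro i
    by_cases h : (i:ℕ) < p ∨ p + (k-1) ≤ (i:ℕ)
    · exact Or.inl ⟨rho n (k-1) p hp1 hpn i, hrho_oldval i h⟩
    · push_neg at h
      refine Or.inr ⟨⟨(i:ℕ) - p, by omega⟩, ?_⟩
      simp only [hNewIdx]
      apply Fin.ext
      simp only [Fin.val_mk]
      omega
  -- the three pieces
  set M₁ : Matrix {j : Fin (n + (k - 1)) // (j : ℕ) < t}
      {j : Fin (n + (k - 1)) // ¬ (j : ℕ) < t} (ZMod 2) :=
    Matrix.of (fun x y =>
      if (((x : Fin (n+(k-1))) : ℕ) < p ∨ p + (k-1) ≤ ((x : Fin (n+(k-1))) : ℕ)) ∧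
         (((y : Fin (n+(k-1))) : ℕ) < p ∨ p + (k-1) ≤ ((y : Fin (n+(k-1))) : ℕ))
      then A (rho n (k-1) p hp1 hpn ↑x) (rho n (k-1) p hp1 hpn ↑y) else 0) with hM₁def
  set M₂ : Matrix {j : Fin (n + (k - 1)) // (j : ℕ) < t}
      {j : Fin (n + (k - 1)) // ¬ (j : ℕ) < t} (ZMod 2) :=
    Matrix.of (fun x y =>
      if (x : Fin (n+(k-1))) = oldIdx P ∧ (y : Fin (n+(k-1))) = oldIdx Q
      then A P Q else 0) with hM₂def
  set M₃ : Matrix {j : Fin (n + (k - 1)) // (j : ℕ) < t}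
      {j : Fin (n + (k - 1)) // ¬ (j : ℕ) < t} (ZMod 2) :=
    A'.submatrix (fun x : {j : Fin (n + (k - 1)) // (j : ℕ) < t} => (x : Fin (n + (k - 1))))
        (fun y : {j : Fin (n + (k - 1)) // ¬ (j : ℕ) < t} => (y : Fin (n + (k - 1))))
      - M₁ - M₂ with hM₃def
  -- rank of M₁
  have hr1 : M₁.rank ≤ w := by
    have e : M₁ = Matrix.diagonal (fun x : {j : Fin (n + (k - 1)) // (j : ℕ) < t} =>
        if ((x : Fin (n+(k-1))) : ℕ) < p ∨ p + (k-1) ≤ ((x : Fin (n+(k-1))) : ℕ)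
        then (1:ZMod 2) else 0) *
      ((A.submatrix (fun a : {j : Fin n // (j : ℕ) < s} => (a : Fin n))
          (fun b : {j : Fin n // ¬ (j : ℕ) < s} => (b : Fin n))).submatrix
        (fun x : {j : Fin (n + (k - 1)) // (j : ℕ) < t} =>
          if h : ((x : Fin (n+(k-1))) : ℕ) < p ∨ p + (k-1) ≤ ((x : Fin (n+(k-1))) : ℕ)
          then (⟨rho n (k-1) p hp1 hpn ↑x, by
            have h1 := hrho_oldval ↑x h
            have h2 := hIdxLt (rho n (k-1) p hp1 hpn ↑x)
            rw [h1] at h2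
            exact h2.mp x.2⟩ : {j : Fin n // (j : ℕ) < s})
          else ⟨⟨0, by omega⟩, by
            have hx2 := x.2
            push_neg at h
            have : 0 < s := by omega
            simpa using this⟩)
        (fun y : {j : Fin (n + (k - 1)) // ¬ (j : ℕ) < t} =>
          if h : ((y : Fin (n+(k-1))) : ℕ) < p ∨ p + (k-1) ≤ ((y : Fin (n+(k-1))) : ℕ)
          then (⟨rho n (k-1) p hp1 hpn ↑y, by
            have h1 := hrho_oldval ↑y h
            have h2 := hIdxLt (rho n (k-1) p hp1 hpn ↑y)
            rw [h1] at h2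
            exact fun hc => y.2 (h2.mpr hc)⟩ : {j : Fin n // ¬ (j : ℕ) < s})
          else ⟨Q, by
            have hy2 := y.2
            push_neg at h
            have : ¬ (Q:ℕ) < s := by omega
            simpa using this⟩)) *
      Matrix.diagonal (fun y : {j : Fin (n + (k - 1)) // ¬ (j : ℕ) < t} =>
        if ((y : Fin (n+(k-1))) : ℕ) < p ∨ p + (k-1) ≤ ((y : Fin (n+(k-1))) : ℕ)
        then (1:ZMod 2) else 0) := by
      ext x y
      rw [Matrix.mul_diagonal, Matrix.diagonal_mul, hM₁def]
      simp only [Matrix.of_apply, Matrix.submatrix_apply]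
      by_cases hx : ((x : Fin (n+(k-1))) : ℕ) < p ∨ p + (k-1) ≤ ((x : Fin (n+(k-1))) : ℕ) <;>
        by_cases hy : ((y : Fin (n+(k-1))) : ℕ) < p ∨ p + (k-1) ≤ ((y : Fin (n+(k-1))) : ℕ) <;>
        simp [hx, hy]
    rw [e]
    exact le_trans (Matrix.rank_mul_le_left _ _) (le_trans (Matrix.rank_mul_le_right _ _)
      (le_trans (rank_submatrix_le' _ _ _) (hw s)))
  -- rank of M₂
  have hsupp2 : ∀ x y, M₂ x y ≠ 0 →
      (x : Fin (n+(k-1))) = oldIdx P ∧ (y : Fin (n+(k-1))) = oldIdx Q := by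
    intro x y h
    rw [hM₂def] at h
    simp only [Matrix.of_apply] at h
    by_cases hc : (x : Fin (n+(k-1))) = oldIdx P ∧ (y : Fin (n+(k-1))) = oldIdx Q
    · exact hc
    · rw [if_neg hc] at h; exact absurd rfl h
  have hr2 : M₂.rank ≤ 1 := by
    refine rank_le_one' _ (fun x y x' y' h1 h2 => ?_)
    obtain ⟨e1, e2⟩ := hsupp2 x y h1
    obtain ⟨e3, e4⟩ := hsupp2 x' y' h2
    exact ⟨Subtype.ext (e1.trans e3.symm), Subtype.ext (e2.trans e4.symm)⟩
  -- rank of M₃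
  set aT : ℕ := if t < p + (k-1) then t - 1 else p + (k-1) - 1 with haT
  set bT : ℕ := if t < p + (k-1) then t else (Q:ℕ) + (k-1) with hbT
  have hsupp3 : ∀ x y, M₃ x y ≠ 0 →
      ((x : Fin (n+(k-1))) : ℕ) = aT ∧ ((y : Fin (n+(k-1))) : ℕ) = bT := by
    intro x y hne
    rw [hM₃def, hM₁def, hM₂def] at hne
    simp only [Matrix.sub_apply, Matrix.submatrix_apply, Matrix.of_apply] at hne
    have hxlt : ((x : Fin (n+(k-1))) : ℕ) < t := x.2
    have hylt : ¬ ((y : Fin (n+(k-1))) : ℕ) < t := y.2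
    rcases htri ↑x with ⟨j, hj⟩ | ⟨u, hu⟩ <;> rcases htri ↑y with ⟨l, hl⟩ | ⟨v, hv⟩
    · -- old row, old column
      exfalso
      rw [← hj, ← hl] at hne
      have hcx : ((oldIdx j : Fin (n+(k-1))) : ℕ) < p ∨
          p + (k-1) ≤ ((oldIdx j : Fin (n+(k-1))) : ℕ) := by
        rw [hOldVal]; split_ifs <;> omega
      have hcy : ((oldIdx l : Fin (n+(k-1))) : ℕ) < p ∨
          p + (k-1) ≤ ((oldIdx l : Fin (n+(k-1))) : ℕ) := by
        rw [hOldVal]; split_ifs <;> omega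
      rw [if_pos ⟨hcx, hcy⟩, hrho_old, hrho_old] at hne
      by_cases hPQ : j = P ∧ l = Q
      · rw [hPQ.1, hPQ.2, hFlip, if_pos ⟨rfl, rfl⟩] at hne
        exact hne (h2z (A P Q))
      · by_cases hQP : j = Q ∧ l = P
        · have e1 : ((oldIdx j : Fin (n+(k-1))) : ℕ) = (Q:ℕ) + (k-1) := by
            rw [hQP.1, hQval]
          have e2 : ((oldIdx l : Fin (n+(k-1))) : ℕ) = p - 1 := by
            rw [hQP.2, hPval]
          rw [hj] at e1
          rw [hl] at e2
          omega
        · rw [hOld j l (by tauto)] at hne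
          rw [if_neg (fun hc => hPQ ⟨hOldInj _ _ hc.1, hOldInj _ _ hc.2⟩)] at hne
          simp at hne
    · -- old row, new column
      rw [← hj, ← hv] at hne
      have hm1 : ¬ ((((oldIdx j : Fin (n+(k-1))) : ℕ) < p ∨
            p + (k-1) ≤ ((oldIdx j : Fin (n+(k-1))) : ℕ)) ∧
          (((newIdx v : Fin (n+(k-1))) : ℕ) < p ∨
            p + (k-1) ≤ ((newIdx v : Fin (n+(k-1))) : ℕ))) := by
        intro hc
        have := hc.2
        rw [hNewVal] at this
        have := v.isLt
        omega
      have hm2 : ¬ ((oldIdx j : Fin (n+(k-1))) = oldIdx P ∧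
          (newIdx v : Fin (n+(k-1))) = oldIdx Q) := by
        intro hc
        have := congrArg (fun z : Fin (n+(k-1)) => (z:ℕ)) hc.2
        simp only [hNewVal, hQval] at this
        have := v.isLt
        omega
      rw [if_neg hm1, if_neg hm2, sub_zero, sub_zero, hB13 j v] at hne
      by_cases hc : (j = P ∧ (v:ℕ) = 0) ∨ (j = Q ∧ (v:ℕ) = k - 2)
      · rcases hc with ⟨hjP, hv0⟩ | ⟨hjQ, hvk⟩
        · have hxv : ((x : Fin (n+(k-1))) : ℕ) = p - 1 := by
            rw [← hj, hjP, hPval]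
          have hyv : ((y : Fin (n+(k-1))) : ℕ) = p + (v:ℕ) := by
            rw [← hv, hNewVal]
          have ht : t = p := by omega
          have hlt : t < p + (k-1) := by omega
          rw [haT, hbT, if_pos hlt, if_pos hlt]
          omega
        · exfalso
          have hxv : ((x : Fin (n+(k-1))) : ℕ) = (Q:ℕ) + (k-1) := by
            rw [← hj, hjQ, hQval]
          have hyv : ((y : Fin (n+(k-1))) : ℕ) = p + (v:ℕ) := by
            rw [← hv, hNewVal]
          have := v.isLt
          omega
      · rw [if_neg hc] at hne
        exact absurd rfl hne
    · -- new row, old column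
      rw [← hu, ← hl] at hne
      have hm1 : ¬ ((((newIdx u : Fin (n+(k-1))) : ℕ) < p ∨
            p + (k-1) ≤ ((newIdx u : Fin (n+(k-1))) : ℕ)) ∧
          (((oldIdx l : Fin (n+(k-1))) : ℕ) < p ∨
            p + (k-1) ≤ ((oldIdx l : Fin (n+(k-1))) : ℕ))) := by
        intro hc
        have := hc.1
        rw [hNewVal] at this
        have := u.isLt
        omega
      have hm2 : ¬ ((newIdx u : Fin (n+(k-1))) = oldIdx P ∧
          (oldIdx l : Fin (n+(k-1))) = oldIdx Q) := by
        intro hc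
        have := congrArg (fun z : Fin (n+(k-1)) => (z:ℕ)) hc.1
        simp only [hNewVal, hPval] at this
        omega
      rw [if_neg hm1, if_neg hm2, sub_zero, sub_zero, hA'.apply, hB13 l u] at hne
      by_cases hc : (l = P ∧ (u:ℕ) = 0) ∨ (l = Q ∧ (u:ℕ) = k - 2)
      · rcases hc with ⟨hlP, hu0⟩ | ⟨hlQ, huk⟩
        · exfalso
          have hxv : ((x : Fin (n+(k-1))) : ℕ) = p + (u:ℕ) := by
            rw [← hu, hNewVal]
          have hyv : ((y : Fin (n+(k-1))) : ℕ) = p - 1 := by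
            rw [← hl, hlP, hPval]
          omega
        · have hxv : ((x : Fin (n+(k-1))) : ℕ) = p + (u:ℕ) := by
            rw [← hu, hNewVal]
          have hyv : ((y : Fin (n+(k-1))) : ℕ) = (Q:ℕ) + (k-1) := by
            rw [← hl, hlQ, hQval]
          have hge : ¬ t < p + (k-1) := by omega
          rw [haT, hbT, if_neg hge, if_neg hge]
          omega
      · rw [if_neg hc] at hne
        exact absurd rfl hne
    · -- new row, new column
      rw [← hu, ← hv] at hne
      have hm1 : ¬ ((((newIdx u : Fin (n+(k-1))) : ℕ) < p ∨
            p + (k-1) ≤ ((newIdx u : Fin (n+(k-1))) : ℕ)) ∧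
          (((newIdx v : Fin (n+(k-1))) : ℕ) < p ∨
            p + (k-1) ≤ ((newIdx v : Fin (n+(k-1))) : ℕ))) := by
        intro hc
        have := hc.1
        rw [hNewVal] at this
        have := u.isLt
        omega
      have hm2 : ¬ ((newIdx u : Fin (n+(k-1))) = oldIdx P ∧
          (newIdx v : Fin (n+(k-1))) = oldIdx Q) := by
        intro hc
        have := congrArg (fun z : Fin (n+(k-1)) => (z:ℕ)) hc.1
        simp only [hNewVal, hPval] at this
        omega
      rw [if_neg hm1, if_neg hm2, sub_zero, sub_zero, hB2 u v] at hne
      by_cases hc : (u:ℕ) + 1 = (v:ℕ) ∨ (v:ℕ) + 1 = (u:ℕ)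
      · have hxv : ((x : Fin (n+(k-1))) : ℕ) = p + (u:ℕ) := by
          rw [← hu, hNewVal]
        have hyv : ((y : Fin (n+(k-1))) : ℕ) = p + (v:ℕ) := by
          rw [← hv, hNewVal]
        have hvlt := v.isLt
        have hult := u.isLt
        have hlt : t < p + (k-1) := by omega
        rw [haT, hbT, if_pos hlt, if_pos hlt]
        omega
      · rw [if_neg hc] at hne
        exact absurd rfl hne
  have hr3 : M₃.rank ≤ 1 := by
    refine rank_le_one' _ (fun x y x' y' h1 h2 => ?_)
    obtain ⟨e1, e2⟩ := hsupp3 x y h1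
    obtain ⟨e3, e4⟩ := hsupp3 x' y' h2
    exact ⟨Subtype.ext (Fin.ext (e1.trans e3.symm)), Subtype.ext (Fin.ext (e2.trans e4.symm))⟩
  -- assemble
  have hdecomp : A'.submatrix
      (fun x : {j : Fin (n + (k - 1)) // (j : ℕ) < t} => (x : Fin (n + (k - 1))))
      (fun y : {j : Fin (n + (k - 1)) // ¬ (j : ℕ) < t} => (y : Fin (n + (k - 1))))
      = M₁ + (M₂ + M₃) := by
    rw [hM₃def]; abel
  show (A'.submatrix
      (fun x : {j : Fin (n + (k - 1)) // (j : ℕ) < t} => (x : Fin (n + (k - 1))))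
      (fun y : {j : Fin (n + (k - 1)) // ¬ (j : ℕ) < t} => (y : Fin (n + (k - 1))))).rank ≤ w + 2
  rw [hdecomp]
  calc (M₁ + (M₂ + M₃)).rank ≤ M₁.rank + (M₂ + M₃).rank := rank_add_le' _ _
    _ ≤ M₁.rank + (M₂.rank + M₃.rank) := by
        exact Nat.add_le_add_left (rank_add_le' _ _) _
    _ ≤ w + (1 + 1) := by
        exact add_le_add hr1 (add_le_add hr2 hr3)
    _ = w + 2 := by omega
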